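/- Let a, b > 0 be real numbers and 0 ≤ t ≤ 1. Then (a !_t b + a !_{1-t} b)/2 + 4t(1-t)(a ∇ b - a ! b) ≤ a ∇ b. -/

import Mathlib

/-- The weighted harmonic mean of positive reals: `a !_t b = ((1-t)a⁻¹ + t b⁻¹)⁻¹`. -/
noncomputable def wharm (t a b : ℝ) : ℝ := ((1 - t) * a⁻¹ + t * b⁻¹)⁻¹

theorem stmt_1 (a b t : ℝ) (ha : 0 < a) (hb : 0 < b) (ht0 : 0 ≤ t) (ht1 : t ≤ 1) :
    (wharm t a b + wharm (1 - t) a b) / 2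
      + 4 * t * (1 - t) * ((a + b) / 2 - wharm (1 / 2) a b) ≤ (a + b) / 2 := by
  have hq : 0 < (1 - t) * b + t * a := by
    rcases eq_or_lt_of_le ht0 with h | h
    · simp [← h]; linarith
    · nlinarith [mul_nonneg (sub_nonneg.2 ht1) hb.le, mul_pos h ha]
  have hp : 0 < t * b + (1 - t) * a := by
    rcases eq_or_lt_of_le ht1 with h | h
    · simp [h]; linarith
    · nlinarith [mul_nonneg ht0 hb.le, mul_pos (sub_pos.2 h) ha]
  have hab : 0 < a + b := by linarith
  have h1 : wharm t a b = a * b / ((1 - t) * b + t * a) := by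
    unfold wharm
    rw [show (1 - t) * a⁻¹ + t * b⁻¹ = ((1 - t) * b + t * a) / (a * b) by
      field_simp, inv_div]
  have h2 : wharm (1 - t) a b = a * b / (t * b + (1 - t) * a) := by
    unfold wharm
    rw [show (1 - (1 - t)) * a⁻¹ + (1 - t) * b⁻¹ = (t * b + (1 - t) * a) / (a * b) by
      field_simp; ring, inv_div]
  have h3 : wharm (1/2) a b = 2 * (a * b) / (a + b) := by
    unfold wharm
    rw [show (1 - 1/2 : ℝ) * a⁻¹ + (1/2) * b⁻¹ = (a + b) / (2 * (a * b)) by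
      field_simp; ring, inv_div]
  have h4 : (a + b) / 2 - 2 * (a * b) / (a + b) = (a - b) ^ 2 / (2 * (a + b)) := by
    field_simp; ring
  rw [h1, h2, h3, h4, div_add_div _ _ hq.ne' hp.ne', div_div, ← mul_div_assoc,
    div_add_div _ _ (by positivity) (by positivity),
    div_le_div_iff₀ (by positivity) (by positivity)]
  nlinarith [sq_nonneg ((2*t - 1) * (a - b)), mul_nonneg (mul_nonneg ht0 (sub_nonneg.2 ht1)) (sq_nonneg (a - b)), sq_nonneg (a - b), mul_pos hq hp, mul_pos hab hab, mul_nonneg (mul_nonneg (mul_nonneg ht0 (sub_nonneg.2 ht1)) (sq_nonneg (a-b))) (sq_nonneg ((2*t-1)*(a-b))), mul_nonneg (mul_nonneg (mul_nonneg ht0 (sub_nonneg.2 ht1)) (sq_nonneg (a-b))) (sq_nonneg (a+b))]
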